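/- Fix integers n ≥ 2 and k ≥ 3 and a constant c > 0; set γ_k := 1/2 − 1/k and Z₁(u) := c u^{−2}(1 − u²)^{1+2γ_k}. Then there exists a constant ĉ such that every solution Z₂ : (0,1) → ℝ of the linear ODE (1/2)(u^{−1} − u) Z₂′(u) + (u^{−2} + 4γ_k) Z₂(u) = −Q_u[Z₁](u)/(2(n−1)) satisfies Z₂(u) = (ĉ + o(1))(1 − u)^{4γ_k} as u ↗ 1; moreover every such solution satisfies Z₂(u) = O(u^{−4}) as u ↘ 0. -/

import Mathlib

open Topology Filter Asymptotics Set

open Real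

/-- `γ_k = 1/2 - 1/k`. -/
noncomputable def gam (k : ℕ) : ℝ := 1/2 - 1/(k:ℝ)

/-- The quadratic operator `Q_u[Z] = Z Z'' - (1/2)(Z')² - Z Z'/u - 2(n-1)Z²/u²`. -/
noncomputable def Qop (n : ℕ) (Z : ℝ → ℝ) (u : ℝ) : ℝ :=
  Z u * deriv (deriv Z) u - (1/2) * (deriv Z u)^2
    - Z u * deriv Z u / u - 2 * ((n:ℝ) - 1) * (Z u)^2 / u^2

noncomputable def pf (γ x : ℝ) : ℝ := (1 - x^2) ^ (2*γ)

noncomputable def Z1 (γ c x : ℝ) : ℝ := c * ((1-x^2) * pf γ x) / x^2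
noncomputable def D1 (γ c x : ℝ) : ℝ :=
  c * (-2*(1-x^2)*pf γ x/x^3 - 2*(1+2*γ)*pf γ x/x)
noncomputable def D2 (γ c x : ℝ) : ℝ :=
  c * (6*(1-x^2)*pf γ x/x^4 + 6*(1+2*γ)*pf γ x/x^2 + 4*(1+2*γ)*(2*γ)*pf γ x/(1-x^2))

lemma pf_pos {γ x : ℝ} (hx : x ∈ Ioo (0:ℝ) 1) : 0 < pf γ x := by
  have hv : 0 < 1 - x^2 := by nlinarith [hx.1, hx.2]
  exact Real.rpow_pos_of_pos hv _

lemma hasDerivAt_pf {γ x : ℝ} (hx : x ∈ Ioo (0:ℝ) 1) :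
    HasDerivAt (pf γ) (-4*γ*x*pf γ x/(1-x^2)) x := by
  have hv : 0 < 1 - x^2 := by nlinarith [hx.1, hx.2]
  have h1 : HasDerivAt (fun y : ℝ => 1 - y^2) (-(2*x)) x := by
    simpa using ((hasDerivAt_pow 2 x).const_sub 1)
  have h2 := h1.rpow_const (p := 2*γ) (Or.inl hv.ne')
  convert h2 using 1
  · rfl
  rw [show (2*γ - 1) = 2*γ + (-1) by ring, Real.rpow_add hv, Real.rpow_neg_one]
  unfold pf
  rw [div_eq_mul_inv]
  ring

lemma hasDerivAt_Z1 {γ c x : ℝ} (hx : x ∈ Ioo (0:ℝ) 1) :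
    HasDerivAt (Z1 γ c) (D1 γ c x) x := by
  have hx0 : x ≠ 0 := hx.1.ne'
  have hv : 0 < 1 - x^2 := by nlinarith [hx.1, hx.2]
  have h1 : HasDerivAt (fun y : ℝ => 1 - y^2) (-(2*x)) x := by
    simpa using ((hasDerivAt_pow 2 x).const_sub 1)
  have hnum : HasDerivAt (fun y : ℝ => c * ((1-y^2) * pf γ y))
      (c * ((-(2*x)) * pf γ x + (1-x^2) * (-4*γ*x*pf γ x/(1-x^2)))) x :=
    (h1.mul (hasDerivAt_pf hx)).const_mul c
  have hden : HasDerivAt (fun y : ℝ => y^2) (2*x) x := by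
    simpa using hasDerivAt_pow 2 x
  have h := hnum.fun_div hden (pow_ne_zero 2 hx0)
  refine h.congr_deriv ?_
  unfold D1
  field_simp
  ring

lemma hasDerivAt_D1 {γ c x : ℝ} (hx : x ∈ Ioo (0:ℝ) 1) :
    HasDerivAt (D1 γ c) (D2 γ c x) x := by
  have hx0 : x ≠ 0 := hx.1.ne'
  have hv : 0 < 1 - x^2 := by nlinarith [hx.1, hx.2]
  have h1 : HasDerivAt (fun y : ℝ => 1 - y^2) (-(2*x)) x := by
    simpa using ((hasDerivAt_pow 2 x).const_sub 1)
  have hp := hasDerivAt_pf (γ := γ) hx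
  have h3 : HasDerivAt (fun y : ℝ => y^3) (3*x^2) x := by
    simpa using hasDerivAt_pow 3 x
  have ht1 : HasDerivAt (fun y : ℝ => -2*(1-y^2)*pf γ y/y^3)
      (((-2*(-(2*x))*pf γ x + -2*(1-x^2)*(-4*γ*x*pf γ x/(1-x^2)))*x^3
        - (-2*(1-x^2)*pf γ x)*(3*x^2))/(x^3)^2) x := by
    exact (((h1.const_mul (-2)).mul hp).div h3 (pow_ne_zero 3 hx0))
  have ht2 : HasDerivAt (fun y : ℝ => 2*(1+2*γ)*pf γ y/y)
      (((2*(1+2*γ))*(-4*γ*x*pf γ x/(1-x^2))*x - 2*(1+2*γ)*pf γ x*1)/x^2) x := by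
    have := ((hp.const_mul (2*(1+2*γ))).fun_div (hasDerivAt_id x) hx0)
    exact this.congr_deriv (by simp only [id])
  have h := (ht1.fun_sub ht2).const_mul c
  have hfun : (fun y : ℝ => c * (-2*(1-y^2)*pf γ y/y^3 - 2*(1+2*γ)*pf γ y/y)) = D1 γ c := rfl
  rw [hfun] at h
  refine h.congr_deriv ?_
  unfold D2
  field_simp
  ring

noncomputable def Qval (n : ℕ) (γ c u : ℝ) : ℝ :=
  c^2*(pf γ u)^2*((8-2*(n:ℝ))*(1-u^2)^2/u^6 + 4*(1+2*γ)*(1-u^2)/u^4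
    + 2*(1+2*γ)*(2*γ-1)/u^2)

lemma Z1_eq {γ c x : ℝ} (hx : x ∈ Ioo (0:ℝ) 1) :
    c * x ^ (-2:ℝ) * (1 - x^2) ^ (1 + 2*γ) = Z1 γ c x := by
  have hx0 : (0:ℝ) < x := hx.1
  have hv : 0 < 1 - x^2 := by nlinarith [hx.1, hx.2]
  have h1 : x ^ (-2:ℝ) = (x^2)⁻¹ := by
    rw [show (-2:ℝ) = -(2:ℕ) by norm_num, Real.rpow_neg hx0.le, Real.rpow_natCast]
  have h2 : (1 - x^2) ^ (1 + 2*γ) = (1-x^2) * pf γ x := by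
    rw [Real.rpow_add hv, Real.rpow_one]; rfl
  rw [h1, h2]
  unfold Z1
  field_simp

lemma Qop_eq (n : ℕ) {γ c u : ℝ} (hu : u ∈ Ioo (0:ℝ) 1) :
    Qop n (fun x => c * x ^ (-2:ℝ) * (1 - x^2) ^ (1 + 2*γ)) u = Qval n γ c u := by
  have hmem : Ioo (0:ℝ) 1 ∈ 𝓝 u := isOpen_Ioo.mem_nhds hu
  have heq : (fun x => c * x ^ (-2:ℝ) * (1 - x^2) ^ (1 + 2*γ)) =ᶠ[𝓝 u] Z1 γ c :=
    eventually_of_mem hmem fun x hx => Z1_eq hx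
  have hd1 : deriv (Z1 γ c) =ᶠ[𝓝 u] D1 γ c :=
    eventually_of_mem hmem fun x hx => (hasDerivAt_Z1 hx).deriv
  have hZu : (fun x => c * x ^ (-2:ℝ) * (1 - x^2) ^ (1 + 2*γ)) u = Z1 γ c u := Z1_eq hu
  have hDu : deriv (fun x => c * x ^ (-2:ℝ) * (1 - x^2) ^ (1 + 2*γ)) u = D1 γ c u := by
    rw [heq.deriv_eq]; exact (hasDerivAt_Z1 hu).deriv
  have hD2u : deriv (deriv (fun x => c * x ^ (-2:ℝ) * (1 - x^2) ^ (1 + 2*γ))) u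
      = D2 γ c u := by
    rw [(heq.deriv.trans hd1).deriv_eq]
    exact (hasDerivAt_D1 hu).deriv
  have hx0 : u ≠ 0 := hu.1.ne'
  have hv : (1 - u^2) ≠ 0 := by nlinarith [hu.1, hu.2]
  unfold Qop
  rw [hZu, hDu, hD2u]
  unfold Z1 D1 D2 Qval
  field_simp
  ring

noncomputable def K1 (n : ℕ) (c : ℝ) : ℝ := -c^2*(8-2*(n:ℝ))/((n:ℝ)-1)
noncomputable def K2 (n : ℕ) (γ c : ℝ) : ℝ := -4*(1+2*γ)*c^2/((n:ℝ)-1)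
noncomputable def K3 (n : ℕ) (γ c : ℝ) : ℝ := -2*(1+2*γ)*(2*γ-1)*c^2/((n:ℝ)-1)

noncomputable def Ffun (n : ℕ) (γ c x : ℝ) : ℝ :=
  -(K1 n c/2)/x^2 + K2 n γ c*(Real.log x - Real.log (1-x^2)/2) + (K3 n γ c/2)/(1-x^2)

noncomputable def Mu (γ x : ℝ) : ℝ := x^2/((1-x^2)*(pf γ x)^2)

lemma hasDerivAt_F {n : ℕ} {γ c x : ℝ} (hx : x ∈ Ioo (0:ℝ) 1) :
    HasDerivAt (Ffun n γ c)
      (K1 n c/x^3 + K2 n γ c/(x*(1-x^2)) + K3 n γ c*x/(1-x^2)^2) x := by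
  have hx0 : (0:ℝ) < x := hx.1
  have hv : 0 < 1 - x^2 := by nlinarith [hx.1, hx.2]
  have h1 : HasDerivAt (fun y : ℝ => 1 - y^2) (-(2*x)) x := by
    simpa using ((hasDerivAt_pow 2 x).const_sub 1)
  have hsq : HasDerivAt (fun y : ℝ => y^2) (2*x) x := by
    simpa using hasDerivAt_pow 2 x
  have ha : HasDerivAt (fun y : ℝ => -(K1 n c/2)/y^2) (-(-(K1 n c/2)*(2*x)/(x^2)^2)) x := by
    simpa [neg_div] using ((hasDerivAt_const x (-(K1 n c/2))).fun_div hsq (pow_ne_zero 2 hx0.ne'))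
  have hb : HasDerivAt (fun y : ℝ => K2 n γ c*(Real.log y - Real.log (1-y^2)/2))
      (K2 n γ c*(x⁻¹ - (-(2*x)/(1-x^2))/2)) x := by
    exact ((Real.hasDerivAt_log hx0.ne').sub ((h1.log hv.ne').div_const 2)).const_mul _
  have hc2 : HasDerivAt (fun y : ℝ => (K3 n γ c/2)/(1-y^2))
      (-((K3 n γ c/2)*(-(2*x))/(1-x^2)^2)) x := by
    simpa [neg_div] using ((hasDerivAt_const x (K3 n γ c/2)).fun_div h1 hv.ne')
  refine ((ha.fun_add hb).fun_add hc2).congr_deriv ?_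
  field_simp
  ring

lemma hasDerivAt_Mu {γ x : ℝ} (hx : x ∈ Ioo (0:ℝ) 1) :
    HasDerivAt (Mu γ) ((2*x*(1-x^2)+(2+8*γ)*x^3)/((1-x^2)^2*(pf γ x)^2)) x := by
  have hx0 : (0:ℝ) < x := hx.1
  have hv : 0 < 1 - x^2 := by nlinarith [hx.1, hx.2]
  have hP := pf_pos (γ := γ) hx
  have h1 : HasDerivAt (fun y : ℝ => 1 - y^2) (-(2*x)) x := by
    simpa using ((hasDerivAt_pow 2 x).const_sub 1)
  have hsq : HasDerivAt (fun y : ℝ => y^2) (2*x) x := by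
    simpa using hasDerivAt_pow 2 x
  have hp2 : HasDerivAt (fun y : ℝ => (pf γ y)^2)
      (2*pf γ x*(-4*γ*x*pf γ x/(1-x^2))) x := by
    have := (hasDerivAt_pf (γ := γ) hx).fun_pow 2
    simpa [mul_comm, mul_assoc, mul_left_comm] using this
  have hden : HasDerivAt (fun y : ℝ => (1-y^2)*(pf γ y)^2)
      ((-(2*x))*(pf γ x)^2 + (1-x^2)*(2*pf γ x*(-4*γ*x*pf γ x/(1-x^2)))) x := h1.mul hp2
  have h := hsq.fun_div hden (by positivity)
  refine h.congr_deriv ?_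
  field_simp
  ring

lemma key_deriv {n : ℕ} {γ c u : ℝ} (hu : u ∈ Ioo (0:ℝ) 1) (hn1 : (n:ℝ) - 1 ≠ 0)
    {Z₂ : ℝ → ℝ} {z' : ℝ} (hZ : HasDerivAt Z₂ z' u)
    (hode : (1/2)*(u⁻¹ - u)*z' + (u ^ (-2:ℝ) + 4*γ)*Z₂ u
      = -(Qval n γ c u)/(2*((n:ℝ)-1))) :
    HasDerivAt (fun x => Mu γ x * Z₂ x - Ffun n γ c x) 0 u := by
  have hx0 : (0:ℝ) < u := hu.1
  have hv : 0 < 1 - u^2 := by nlinarith [hu.1, hu.2]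
  have hP := pf_pos (γ := γ) hu
  have h := ((hasDerivAt_Mu (γ:=γ) hu).fun_mul hZ).fun_sub (hasDerivAt_F (n:=n) (γ:=γ) (c:=c) hu)
  refine h.congr_deriv ?_
  have hu2 : u ^ (-2:ℝ) = (u^2)⁻¹ := by
    rw [show (-2:ℝ) = -(2:ℕ) by norm_num, Real.rpow_neg hx0.le, Real.rpow_natCast]
  rw [hu2] at hode
  have hkey : (2*u*(1-u^2)+(2+8*γ)*u^3)/((1-u^2)^2*(pf γ u)^2) * Z₂ u + Mu γ u * z'
      - (K1 n c/u^3 + K2 n γ c/(u*(1-u^2)) + K3 n γ c*u/(1-u^2)^2)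
      = (2*u/(1-u^2)) * Mu γ u *
        ((1/2)*(u⁻¹ - u)*z' + ((u^2)⁻¹ + 4*γ)*Z₂ u - (-(Qval n γ c u)/(2*((n:ℝ)-1)))) := by
    unfold Mu Qval K1 K2 K3
    field_simp
    ring
  rw [eq_comm, hkey, hode, sub_self, mul_zero]

lemma rep {γ : ℝ} {Z₂ F : ℝ → ℝ}
    (hG : ∀ u ∈ Ioo (0:ℝ) 1, HasDerivAt (fun x => Mu γ x * Z₂ x - F x) 0 u) :
    ∀ u ∈ Ioo (0:ℝ) 1,
      Z₂ u = (F u + (Mu γ (1/2) * Z₂ (1/2) - F (1/2))) * ((1-u^2) * (pf γ u)^2) / u^2 := by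
  set G : ℝ → ℝ := fun x => Mu γ x * Z₂ x - F x with hGdef
  have hconst : ∀ u ∈ Ioo (0:ℝ) 1, G u = G (1/2) := by
    intro u hu
    refine (convex_Ioo (0:ℝ) 1).is_const_of_fderivWithin_eq_zero
      (fun x hx => ((hG x hx).differentiableAt).differentiableWithinAt) ?_ hu (by norm_num)
    intro x hx
    rw [fderivWithin_of_isOpen isOpen_Ioo hx, (hG x hx).hasFDerivAt.fderiv]
    refine ContinuousLinearMap.ext fun y => ?_
    simp
  intro u hu
  have hx0 : (0:ℝ) < u := hu.1
  have hv : 0 < 1 - u^2 := by nlinarith [hu.1, hu.2]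
  have hP := pf_pos (γ := γ) hu
  have h := hconst u hu
  simp only [hGdef] at h
  have hMu : Mu γ u ≠ 0 := by unfold Mu; positivity
  have hz : Mu γ u * Z₂ u = F u + (Mu γ (1/2) * Z₂ (1/2) - F (1/2)) := by linarith
  rw [← hz]
  unfold Mu
  field_simp

lemma pf_sq {γ u : ℝ} (hu : u ∈ Ioo (0:ℝ) 1) :
    (pf γ u)^2 = (1-u)^(4*γ) * (1+u)^(4*γ) := by
  have h1 : (0:ℝ) ≤ 1 - u := by linarith [hu.2]
  have h2 : (0:ℝ) ≤ 1 + u := by linarith [hu.1]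
  have hv : 0 < 1 - u^2 := by nlinarith [hu.1, hu.2]
  unfold pf
  rw [sq, ← Real.rpow_add hv, show 2*γ+2*γ = 4*γ by ring,
    show 1-u^2 = (1-u)*(1+u) by ring, Real.mul_rpow h1 h2]

lemma littleo_part {n : ℕ} {γ c Cst : ℝ} {Z₂ : ℝ → ℝ}
    (hrep : ∀ u ∈ Ioo (0:ℝ) 1,
      Z₂ u = (Ffun n γ c u + Cst) * ((1-u^2)*(pf γ u)^2)/u^2) :
    (fun u => Z₂ u - (K3 n γ c/2*(2:ℝ)^(4*γ))*(1-u)^(4*γ)) =o[𝓝[<](1:ℝ)]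
      fun u => (1-u)^(4*γ) := by
  set cH : ℝ := K3 n γ c/2*(2:ℝ)^(4*γ) with hcH
  have hIoo : ∀ᶠ u in 𝓝[<](1:ℝ), u ∈ Ioo (0:ℝ) 1 :=
    eventually_of_mem (Ioo_mem_nhdsLT_of_mem (by norm_num : (1:ℝ) ∈ Ioc (0:ℝ) 1)) fun x hx => hx
  rw [isLittleO_iff_tendsto']
  · -- main limit
    set φ : ℝ → ℝ := fun u =>
      ((-(K1 n c/2)*(1-u^2)/u^2 + K2 n γ c*((1-u^2)*Real.log u)
        - K2 n γ c/2*((1-u^2)*Real.log (1-u^2)) + K3 n γ c/2 + Cst*(1-u^2))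
        * ((1+u)^(4*γ)/u^2)) - cH with hφ
    have hφlim : Tendsto φ (𝓝[<](1:ℝ)) (𝓝 0) := by
      have hvlog : Tendsto (fun u : ℝ => (1-u^2)*Real.log (1-u^2)) (𝓝[<](1:ℝ)) (𝓝 0) := by
        have h1 : Tendsto (fun u : ℝ => 1-u^2) (𝓝[<](1:ℝ)) (𝓝[>](0:ℝ)) := by
          rw [tendsto_nhdsWithin_iff]
          constructor
          · have : ContinuousAt (fun u : ℝ => 1-u^2) 1 := by fun_prop
            have h0 := this.tendsto.mono_left (nhdsWithin_le_nhds (s := Iio (1:ℝ)))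
            simpa using h0
          · filter_upwards [hIoo] with x hx
            have : 0 < 1 - x^2 := by nlinarith [hx.1, hx.2]
            exact this
        have h2 : Tendsto (fun y : ℝ => y * Real.log y) (𝓝[>](0:ℝ)) (𝓝 0) := by
          have := tendsto_log_mul_rpow_nhdsGT_zero (r := 1) one_pos
          refine this.congr' ?_ |>.mono_left le_rfl
          filter_upwards [self_mem_nhdsWithin] with y hy
          rw [Real.rpow_one]; ring
        exact h2.comp h1
      have hcont : Tendsto (fun u : ℝ =>
          (-(K1 n c/2)*(1-u^2)/u^2 + K2 n γ c*((1-u^2)*Real.log u) + K3 n γ c/2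
            + Cst*(1-u^2))) (𝓝[<](1:ℝ)) (𝓝 (K3 n γ c/2)) := by
        have : ContinuousAt (fun u : ℝ =>
            (-(K1 n c/2)*(1-u^2)/u^2 + K2 n γ c*((1-u^2)*Real.log u) + K3 n γ c/2
              + Cst*(1-u^2))) 1 := by
          have hlog : ContinuousAt Real.log 1 := Real.continuousAt_log one_ne_zero
          fun_prop (disch := norm_num)
        have h0 := this.tendsto.mono_left (nhdsWithin_le_nhds (s := Iio (1:ℝ)))
        simpa using h0
      have hpow : Tendsto (fun u : ℝ => (1+u)^(4*γ)/u^2) (𝓝[<](1:ℝ))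
          (𝓝 ((2:ℝ)^(4*γ))) := by
        have hc : ContinuousAt (fun u : ℝ => 1+u) 1 := by fun_prop
        have hb : ContinuousAt (fun u : ℝ => (1+u)^(4*γ)) 1 :=
          hc.rpow_const (Or.inl (by norm_num))
        have : ContinuousAt (fun u : ℝ => (1+u)^(4*γ)/u^2) 1 := by
          exact hb.div (by fun_prop) (by norm_num)
        have h0 := this.tendsto.mono_left (nhdsWithin_le_nhds (s := Iio (1:ℝ)))
        norm_num at h0
        convert h0 using 2 <;> norm_num
        
      have : Tendsto φ (𝓝[<](1:ℝ))
          (𝓝 ((K3 n γ c/2 - K2 n γ c/2*0)*((2:ℝ)^(4*γ)) - cH)) := by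
        have hsum : Tendsto (fun u : ℝ =>
            (-(K1 n c/2)*(1-u^2)/u^2 + K2 n γ c*((1-u^2)*Real.log u)
              - K2 n γ c/2*((1-u^2)*Real.log (1-u^2)) + K3 n γ c/2 + Cst*(1-u^2)))
            (𝓝[<](1:ℝ)) (𝓝 (K3 n γ c/2 - K2 n γ c/2*0)) := by
          have := hcont.sub ((hvlog.const_mul (K2 n γ c/2)))
          convert this using 2 with u <;> ring
        have := (hsum.mul hpow).sub_const cH
        simpa [hφ] using this
      convert this using 2
      rw [hcH]; ring
    refine hφlim.congr' ?_
    filter_upwards [hIoo] with u hu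
    have hx0 : (0:ℝ) < u := hu.1
    have h1u : (0:ℝ) < 1 - u := by linarith [hu.2]
    have hv : 0 < 1 - u^2 := by nlinarith [hu.1, hu.2]
    have hw : (0:ℝ) < (1-u)^(4*γ) := Real.rpow_pos_of_pos h1u _
    rw [hφ]
    rw [hrep u hu, pf_sq hu]
    unfold Ffun
    field_simp
    ring
  · filter_upwards [hIoo] with u hu h
    have h1u : (0:ℝ) < 1 - u := by linarith [hu.2]
    exact absurd h (Real.rpow_pos_of_pos h1u _).ne'

lemma bigO_part {n : ℕ} {γ c Cst : ℝ} {Z₂ : ℝ → ℝ} (hγ : 0 ≤ γ)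
    (hrep : ∀ u ∈ Ioo (0:ℝ) 1,
      Z₂ u = (Ffun n γ c u + Cst) * ((1-u^2)*(pf γ u)^2)/u^2) :
    (fun u => Z₂ u) =O[𝓝[>](0:ℝ)] fun u => u^(-4:ℝ) := by
  rw [isBigO_iff]
  refine ⟨|K1 n c|/2 + 2*|K2 n γ c| + |K3 n γ c| + |Cst|, ?_⟩
  filter_upwards [Ioo_mem_nhdsGT_of_mem
    (show (0:ℝ) ∈ Ico (0:ℝ) (1/2) by norm_num)] with u hu
  set M : ℝ := |K1 n c|/2 + 2*|K2 n γ c| + |K3 n γ c| + |Cst| with hM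
  have hx0 : (0:ℝ) < u := hu.1
  have hu2 : u < 1/2 := hu.2
  have hu1 : u ∈ Ioo (0:ℝ) 1 := ⟨hx0, by linarith⟩
  have hv : 0 < 1 - u^2 := by nlinarith
  have hv34 : (3/4:ℝ) ≤ 1 - u^2 := by nlinarith
  have hv1 : 1 - u^2 ≤ 1 := by nlinarith
  have hP : 0 < pf γ u := pf_pos hu1
  have hP1 : pf γ u ≤ 1 := Real.rpow_le_one hv.le hv1 (by linarith)
  set A : ℝ := |Real.log u| with hA
  set B : ℝ := |Real.log (1-u^2)| with hB
  have hA0 : 0 ≤ A := abs_nonneg _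
  have hB0 : 0 ≤ B := abs_nonneg _
  have hAu : A*u ≤ 1 := by
    rw [hA, abs_of_nonpos (Real.log_nonpos hx0.le (by linarith))]
    have h := Real.log_le_sub_one_of_pos (inv_pos.mpr hx0)
    rw [Real.log_inv] at h
    have h2 : -Real.log u ≤ u⁻¹ := by linarith [inv_pos.mpr hx0]
    calc -Real.log u * u ≤ u⁻¹ * u := by
          exact mul_le_mul_of_nonneg_right h2 hx0.le
      _ = 1 := inv_mul_cancel₀ hx0.ne'
  have hB1 : B ≤ 1 := by
    rw [hB, abs_of_nonpos (Real.log_nonpos hv.le hv1)]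
    have h := Real.log_le_sub_one_of_pos (inv_pos.mpr hv)
    rw [Real.log_inv] at h
    have h43 : (1-u^2)⁻¹ ≤ 4/3 := by
      rw [inv_le_comm₀ (by linarith) (by norm_num)]
      linarith
    linarith
  have hFb : |Ffun n γ c u + Cst| ≤ M/u^2 := by
    have t1 : |(-(K1 n c/2))/u^2| = |K1 n c|/2/u^2 := by
      rw [abs_div, abs_neg, abs_of_pos (pow_pos hx0 2), abs_div, abs_two]
    have t2 : |K2 n γ c*(Real.log u - Real.log (1-u^2)/2)| ≤ |K2 n γ c| * (A + B/2) := by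
      rw [abs_mul]
      refine mul_le_mul_of_nonneg_left ?_ (abs_nonneg _)
      calc |Real.log u - Real.log (1-u^2)/2|
          ≤ |Real.log u| + |Real.log (1-u^2)/2| := abs_sub _ _
        _ = A + B/2 := by rw [abs_div, abs_two]
    have t3 : |(K3 n γ c/2)/(1-u^2)| = (|K3 n γ c|/2)/(1-u^2) := by
      rw [abs_div, abs_of_pos hv, abs_div, abs_two]
    have tri : |Ffun n γ c u + Cst|
        ≤ |K1 n c|/2/u^2 + |K2 n γ c| * (A + B/2) + (|K3 n γ c|/2)/(1-u^2) + |Cst| := by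
      unfold Ffun
      calc |(-(K1 n c/2)/u^2 + K2 n γ c*(Real.log u - Real.log (1-u^2)/2)
            + (K3 n γ c/2)/(1-u^2)) + Cst|
          ≤ |(-(K1 n c/2)/u^2 + K2 n γ c*(Real.log u - Real.log (1-u^2)/2)
            + (K3 n γ c/2)/(1-u^2))| + |Cst| := abs_add_le _ _
        _ ≤ |(-(K1 n c/2)/u^2 + K2 n γ c*(Real.log u - Real.log (1-u^2)/2))|
            + |(K3 n γ c/2)/(1-u^2)| + |Cst| := by
              gcongr
              exact abs_add_le _ _
        _ ≤ |(-(K1 n c/2))/u^2| + |K2 n γ c*(Real.log u - Real.log (1-u^2)/2)|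
            + |(K3 n γ c/2)/(1-u^2)| + |Cst| := by
              gcongr
              exact abs_add_le _ _
        _ ≤ |K1 n c|/2/u^2 + |K2 n γ c| * (A + B/2) + (|K3 n γ c|/2)/(1-u^2) + |Cst| := by
              rw [t1, t3]
              gcongr
    refine tri.trans ?_
    rw [le_div_iff₀ (pow_pos hx0 2)]
    have p1 : |K1 n c|/2/u^2*u^2 = |K1 n c|/2 := div_mul_cancel₀ _ (pow_ne_zero 2 hx0.ne')
    have p2 : (|K2 n γ c| * (A + B/2))*u^2 ≤ 2*|K2 n γ c| := by
      have hABu : (A + B/2)*u^2 ≤ 2 := by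
        have h1 : A*u*u ≤ 1*u := mul_le_mul_of_nonneg_right hAu hx0.le
        nlinarith
      calc (|K2 n γ c| * (A + B/2))*u^2 = |K2 n γ c| *((A + B/2)*u^2) := by ring
        _ ≤ |K2 n γ c| *2 := mul_le_mul_of_nonneg_left hABu (abs_nonneg _)
        _ = 2*|K2 n γ c| := by ring
    have p3 : ((|K3 n γ c|/2)/(1-u^2))*u^2 ≤ |K3 n γ c| := by
      rw [div_mul_eq_mul_div, div_le_iff₀ hv]
      nlinarith [abs_nonneg (K3 n γ c)]
    have p4 : |Cst| * u^2 ≤ |Cst| := by nlinarith [abs_nonneg Cst]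
    have expand : (|K1 n c|/2/u^2 + |K2 n γ c| * (A + B/2) + (|K3 n γ c|/2)/(1-u^2) + |Cst|)*u^2
        = |K1 n c|/2/u^2*u^2 + (|K2 n γ c| * (A + B/2))*u^2
          + ((|K3 n γ c|/2)/(1-u^2))*u^2 + |Cst| * u^2 := by ring
    rw [expand, p1, hM]
    linarith
  have hnorm4 : ‖u ^ (-4:ℝ)‖ = (u^4)⁻¹ := by
    rw [Real.norm_eq_abs, show (-4:ℝ) = -(4:ℕ) by norm_num, Real.rpow_neg hx0.le,
      Real.rpow_natCast, abs_inv, abs_of_pos (pow_pos hx0 4)]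
  rw [hnorm4, Real.norm_eq_abs, hrep u hu1]
  have hvP : (1-u^2)*(pf γ u)^2 ≤ 1 := by nlinarith
  have hvP0 : 0 < (1-u^2)*(pf γ u)^2 := by positivity
  calc |(Ffun n γ c u + Cst) * ((1-u^2)*(pf γ u)^2)/u^2|
      = |Ffun n γ c u + Cst| * ((1-u^2)*(pf γ u)^2)/u^2 := by
        rw [abs_div, abs_mul, abs_of_pos hvP0, abs_of_pos (pow_pos hx0 2)]
    _ ≤ (M/u^2) * 1/u^2 := by gcongr
    _ = M * (u^4)⁻¹ := by
        rw [mul_one, div_div, ← pow_add]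
        norm_num [div_eq_mul_inv]
  -- note gcongr side conditions

/-- asymptotics of solutions `Z₂` of
`(1/2)(u⁻¹ - u) Z₂' + (u⁻² + 4γ_k) Z₂ = -Q_u[Z₁]/(2(n-1))`,
where `Z₁(u) = c u⁻² (1-u²)^{1+2γ_k}`: there is a single constant `cHat` so that every
solution satisfies `Z₂(u) = (cHat + o(1))(1-u)^{4γ_k}` as `u ↗ 1`, and every solution is
`O(u⁻⁴)` as `u ↘ 0`. -/
theorem stmt4 (n k : ℕ) (hn : 2 ≤ n) (hk : 3 ≤ k) (c : ℝ) (hc : 0 < c) :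
    ∃ cHat : ℝ, ∀ Z₂ Z₂' : ℝ → ℝ,
      (∀ u ∈ Set.Ioo (0:ℝ) 1, HasDerivAt Z₂ (Z₂' u) u) →
      (∀ u ∈ Set.Ioo (0:ℝ) 1,
        (1/2) * (u⁻¹ - u) * Z₂' u + (u ^ (-2:ℝ) + 4 * gam k) * Z₂ u
          = -(Qop n (fun x => c * x ^ (-2:ℝ) * (1 - x^2) ^ (1 + 2 * gam k)) u)
              / (2 * ((n:ℝ) - 1))) →
      ((fun u => Z₂ u - cHat * (1 - u) ^ (4 * gam k)) =o[𝓝[<] (1:ℝ)]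
          fun u => (1 - u) ^ (4 * gam k)) ∧
      ((fun u => Z₂ u) =O[𝓝[>] (0:ℝ)] fun u => u ^ (-4:ℝ)) := by
  have hγ0 : (0:ℝ) ≤ gam k := by
    unfold gam
    have hk3 : (3:ℝ) ≤ (k:ℝ) := by exact_mod_cast hk
    have : (1:ℝ)/(k:ℝ) ≤ 1/3 := by
      apply div_le_div_of_nonneg_left (by norm_num) (by norm_num) hk3
    linarith
  have hn1 : (n:ℝ) - 1 ≠ 0 := by
    have : (2:ℝ) ≤ (n:ℝ) := by exact_mod_cast hn
    linarith
  refine ⟨K3 n (gam k) c/2*(2:ℝ)^(4*gam k), ?_⟩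
  intro Z₂ Z₂' hder hode
  have hG : ∀ u ∈ Ioo (0:ℝ) 1,
      HasDerivAt (fun x => Mu (gam k) x * Z₂ x - Ffun n (gam k) c x) 0 u := by
    intro u hu
    have h := hode u hu
    rw [Qop_eq n hu] at h
    exact key_deriv hu hn1 (hder u hu) h
  have hrep := rep hG
  exact ⟨littleo_part hrep, bigO_part hγ0 hrep⟩
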